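/- Let p̂ be a positive random variable with E[p̂] = c > 0 and E[p̂^{-1}] < ∞. Write Δ = (p̂ - c)/c. Then |log c − E[log p̂] − (1/2)·E[Δ²]| ≤ (E[(1+Δ)^{-1}])^{1/2} · (E[Δ⁶]/5)^{1/2}. -/

import Mathlib

open MeasureTheory

lemma key_ineq {x : ℝ} (hx : -1 < x) :
    2 * Real.sqrt 5 * Real.sqrt (1+x) ≤ 6 + 5*x := by
  have hs : 0 ≤ Real.sqrt (1+x) := Real.sqrt_nonneg _
  have hs2 : Real.sqrt (1+x) ^ 2 = 1 + x := Real.sq_sqrt (by linarith)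
  have hr : 0 ≤ Real.sqrt 5 := Real.sqrt_nonneg _
  have hr2 : Real.sqrt 5 ^ 2 = 5 := Real.sq_sqrt (by norm_num)
  nlinarith [sq_nonneg (5*x+4), mul_nonneg hr hs, sq_nonneg (Real.sqrt 5 * Real.sqrt (1+x)),
    sq_nonneg (6 + 5*x - 2*Real.sqrt 5 * Real.sqrt (1+x))]

noncomputable def Ffun : ℝ → ℝ := fun x => Real.log (1+x) - x + x^2/2
noncomputable def Gfun : ℝ → ℝ := fun x => x^3 / (Real.sqrt 5 * Real.sqrt (1+x))

lemma hasDerivF {x : ℝ} (hx : -1 < x) : HasDerivAt Ffun (x^2/(1+x)) x := by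
  have h0 : (1:ℝ) + x ≠ 0 := by linarith
  have h1 : HasDerivAt (fun y : ℝ => 1 + y) 1 x := (hasDerivAt_id x).const_add 1
  have h2 : HasDerivAt (fun y : ℝ => Real.log (1+y)) (1/(1+x)) x := by
    simpa using h1.log h0
  have h3 : HasDerivAt (fun y : ℝ => y^2/2) x x := by
    simpa using (hasDerivAt_pow 2 x).div_const 2
  have h4 := (h2.sub (hasDerivAt_id x)).add h3
  refine h4.congr_deriv ?_
  rw [eq_comm, div_eq_iff h0, add_mul, sub_mul, one_div, inv_mul_cancel₀ h0]
  ring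

lemma hasDerivG {x : ℝ} (hx : -1 < x) :
    HasDerivAt Gfun ((3*x^2 * (Real.sqrt 5 * Real.sqrt (1+x)) -
      x^3 * (Real.sqrt 5 * (1/(2*Real.sqrt (1+x))))) / (Real.sqrt 5 * Real.sqrt (1+x))^2) x := by
  have h0 : (1:ℝ) + x ≠ 0 := by linarith
  have hspos : 0 < Real.sqrt (1+x) := Real.sqrt_pos.mpr (by linarith)
  have hrpos : 0 < Real.sqrt 5 := Real.sqrt_pos.mpr (by norm_num)
  have h1 : HasDerivAt (fun y : ℝ => 1 + y) 1 x := (hasDerivAt_id x).const_add 1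
  have h2 : HasDerivAt (fun y : ℝ => Real.sqrt (1+y)) (1/(2*Real.sqrt (1+x))) x := by
    simpa using h1.sqrt h0
  have h3 : HasDerivAt (fun y : ℝ => Real.sqrt 5 * Real.sqrt (1+y))
      (Real.sqrt 5 * (1/(2*Real.sqrt (1+x)))) x := h2.const_mul _
  have h4 : HasDerivAt (fun y : ℝ => y^3) (3*x^2) x := by
    simpa using hasDerivAt_pow 3 x
  exact h4.div h3 (by positivity)

lemma derivG_ge_derivF {x : ℝ} (hx : -1 < x) : x^2/(1+x) ≤
      (3*x^2 * (Real.sqrt 5 * Real.sqrt (1+x)) -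
        x^3 * (Real.sqrt 5 * (1/(2*Real.sqrt (1+x))))) / (Real.sqrt 5 * Real.sqrt (1+x))^2 := by
    have hk := key_ineq hx
    set s := Real.sqrt (1+x) with hsdef
    set r := Real.sqrt 5 with hrdef
    have hspos : 0 < s := Real.sqrt_pos.mpr (by linarith)
    have hrpos : 0 < r := Real.sqrt_pos.mpr (by norm_num)
    have hs2 : s ^ 2 = 1 + x := Real.sq_sqrt (by linarith)
    have hr2 : r ^ 2 = 5 := Real.sq_sqrt (by norm_num)
    have h1x : (0:ℝ) < 1 + x := by linarith
    have hinv : 1/(2*s) = s/(2*(1+x)) := by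
      rw [← hs2]; field_simp
    have hchain := mul_le_mul_of_nonneg_left hk
      (mul_nonneg (sq_nonneg x) (mul_pos hrpos hspos).le)
    rw [hinv, div_le_div_iff₀ h1x (by positivity)]
    have hexp : (3*x^2 * (r * s) - x^3 * (r * (s/(2*(1+x))))) * (1+x)
        = 3*x^2*r*s*(1+x) - x^3*r*s/2 := by
      field_simp
    rw [hexp]
    nlinarith [hchain, hs2, hr2, mul_pos hrpos hspos, sq_nonneg x]

lemma Hmono {a b : ℝ} (ha : -1 < a) (hab : a ≤ b) :
    Gfun a - Ffun a ≤ Gfun b - Ffun b := by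
  have hmono : MonotoneOn (fun x => Gfun x - Ffun x) (Set.Icc a b) := by
    apply monotoneOn_of_deriv_nonneg (convex_Icc a b)
    · intro x hxm
      have hx : -1 < x := lt_of_lt_of_le ha hxm.1
      exact (((hasDerivG hx).sub (hasDerivF hx)).continuousAt).continuousWithinAt
    · intro x hxm
      rw [interior_Icc] at hxm
      have hx : -1 < x := lt_of_lt_of_le ha hxm.1.le
      exact ((hasDerivG hx).sub (hasDerivF hx)).differentiableAt.differentiableWithinAt
    · intro x hxm
      rw [interior_Icc] at hxm
      have hx : -1 < x := lt_of_lt_of_le ha hxm.1.le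
      rw [show (fun x => Gfun x - Ffun x) = Gfun - Ffun from rfl, ((hasDerivG hx).sub (hasDerivF hx)).deriv]
      have := derivG_ge_derivF hx
      linarith
  exact hmono (Set.left_mem_Icc.mpr hab) (Set.right_mem_Icc.mpr hab) hab

lemma Fmono {a b : ℝ} (ha : -1 < a) (hab : a ≤ b) : Ffun a ≤ Ffun b := by
  have hmono : MonotoneOn Ffun (Set.Icc a b) := by
    apply monotoneOn_of_deriv_nonneg (convex_Icc a b)
    · intro x hxm
      have hx : -1 < x := lt_of_lt_of_le ha hxm.1
      exact (hasDerivF hx).continuousAt.continuousWithinAt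
    · intro x hxm
      rw [interior_Icc] at hxm
      have hx : -1 < x := lt_of_lt_of_le ha hxm.1.le
      exact (hasDerivF hx).differentiableAt.differentiableWithinAt
    · intro x hxm
      rw [interior_Icc] at hxm
      have hx : -1 < x := lt_of_lt_of_le ha hxm.1.le
      rw [(hasDerivF hx).deriv]
      have h1x : (0:ℝ) < 1 + x := by linarith
      positivity
  exact hmono (Set.left_mem_Icc.mpr hab) (Set.right_mem_Icc.mpr hab) hab

lemma F0 : Ffun 0 = 0 := by simp [Ffun]
lemma G0 : Gfun 0 = 0 := by simp [Gfun]

lemma ptwise {t : ℝ} (ht : -1 < t) :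
    |Real.log (1+t) - t + t^2/2| ≤ |t|^3 / (Real.sqrt 5 * Real.sqrt (1+t)) := by
  have hspos : 0 < Real.sqrt (1+t) := Real.sqrt_pos.mpr (by linarith)
  have hrpos : 0 < Real.sqrt 5 := Real.sqrt_pos.mpr (by norm_num)
  rcases le_or_gt 0 t with h | h
  · have h1 : Ffun 0 ≤ Ffun t := Fmono (by norm_num) h
    have h2 : Gfun 0 - Ffun 0 ≤ Gfun t - Ffun t := Hmono (by norm_num) h
    rw [F0] at h1; rw [F0, G0] at h2
    have habs : |t| = t := abs_of_nonneg h
    show |Ffun t| ≤ |t|^3 / (Real.sqrt 5 * Real.sqrt (1+t))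
    rw [abs_of_nonneg h1, habs]
    have : Ffun t ≤ Gfun t := by linarith
    simpa [Gfun] using this
  · have h1 : Ffun t ≤ Ffun 0 := Fmono ht h.le
    have h2 : Gfun t - Ffun t ≤ Gfun 0 - Ffun 0 := Hmono ht h.le
    rw [F0] at h1; rw [F0, G0] at h2
    have habs : |t| = -t := abs_of_neg h
    show |Ffun t| ≤ |t|^3 / (Real.sqrt 5 * Real.sqrt (1+t))
    rw [abs_of_nonpos h1, habs]
    have : -Ffun t ≤ -Gfun t := by linarith
    calc -Ffun t ≤ -Gfun t := this
      _ = (-t)^3 / (Real.sqrt 5 * Real.sqrt (1+t)) := by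
          simp [Gfun]; ring

lemma cs_aux {Ω : Type*} [MeasurableSpace Ω] {μ : Measure Ω} {f g : Ω → ℝ}
    (hf : MemLp f 2 μ) (hg : MemLp g 2 μ) :
    Integrable (fun ω => f ω * g ω) μ ∧
    ∫ ω, f ω * g ω ∂μ ≤ Real.sqrt (∫ ω, f ω ^ 2 ∂μ) * Real.sqrt (∫ ω, g ω ^ 2 ∂μ) := by
  set F := hf.toLp f with hFdef
  set G := hg.toLp g with hGdef
  have hFf : (F : Ω → ℝ) =ᵐ[μ] f := hf.coeFn_toLp
  have hGg : (G : Ω → ℝ) =ᵐ[μ] g := hg.coeFn_toLp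
  have hintFG : Integrable (fun ω => (F : Ω → ℝ) ω * (G : Ω → ℝ) ω) μ := by
    have := L2.integrable_inner (𝕜 := ℝ) F G
    simpa [RCLike.inner_apply, conj_trivial, mul_comm] using this
  have hint : Integrable (fun ω => f ω * g ω) μ :=
    hintFG.congr (by filter_upwards [hFf, hGg] with ω h1 h2; rw [h1, h2])
  refine ⟨hint, ?_⟩
  have hinner : (inner ℝ F G : ℝ) = ∫ ω, f ω * g ω ∂μ := by
    rw [L2.inner_def]
    simp_rw [RCLike.inner_apply, conj_trivial]
    exact integral_congr_ae (by filter_upwards [hFf, hGg] with ω h1 h2; rw [h1, h2]; ring)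
  have hnF : ‖F‖ = Real.sqrt (∫ ω, f ω ^ 2 ∂μ) := by
    have h1 : (inner ℝ F F : ℝ) = ∫ ω, f ω ^ 2 ∂μ := by
      rw [L2.inner_def]
      simp_rw [RCLike.inner_apply, conj_trivial]
      exact integral_congr_ae (by filter_upwards [hFf] with ω h1; rw [h1]; ring)
    rw [← h1, real_inner_self_eq_norm_sq]
    exact (Real.sqrt_sq (norm_nonneg _)).symm
  have hnG : ‖G‖ = Real.sqrt (∫ ω, g ω ^ 2 ∂μ) := by
    have h1 : (inner ℝ G G : ℝ) = ∫ ω, g ω ^ 2 ∂μ := by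
      rw [L2.inner_def]
      simp_rw [RCLike.inner_apply, conj_trivial]
      exact integral_congr_ae (by filter_upwards [hGg] with ω h1; rw [h1]; ring)
    rw [← h1, real_inner_self_eq_norm_sq]
    exact (Real.sqrt_sq (norm_nonneg _)).symm
  calc ∫ ω, f ω * g ω ∂μ = (inner ℝ F G : ℝ) := hinner.symm
    _ ≤ ‖F‖ * ‖G‖ := real_inner_le_norm F G
    _ = _ := by rw [hnF, hnG]

/-- Prop 1(c): bias of a Monte Carlo objective.  With `Δ = (p̂ - c)/c`,
`|log c − E[log p̂] − (1/2)E[Δ²]| ≤ (E[(1+Δ)⁻¹])^{1/2} (E[Δ⁶]/5)^{1/2}`. -/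
theorem stmt_2 {Ω : Type*} [MeasurableSpace Ω] (μ : Measure Ω) [IsProbabilityMeasure μ]
    (phat : Ω → ℝ) (c : ℝ) (hc : 0 < c) (hpos : ∀ ω, 0 < phat ω)
    (hint : Integrable phat μ) (hmean : ∫ ω, phat ω ∂μ = c)
    (hinv : Integrable (fun ω => (phat ω)⁻¹) μ)
    (Δ : Ω → ℝ) (hΔ : ∀ ω, Δ ω = (phat ω - c) / c)
    (hlogint : Integrable (fun ω => Real.log (phat ω)) μ)
    (hΔ2 : Integrable (fun ω => (Δ ω) ^ 2) μ)
    (hΔ6 : Integrable (fun ω => (Δ ω) ^ 6) μ) :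
    |Real.log c - ∫ ω, Real.log (phat ω) ∂μ - (1 / 2) * ∫ ω, (Δ ω) ^ 2 ∂μ| ≤
      Real.sqrt (∫ ω, (1 + Δ ω)⁻¹ ∂μ) * Real.sqrt ((∫ ω, (Δ ω) ^ 6 ∂μ) / 5) := by
  have hcne : c ≠ 0 := ne_of_gt hc
  have h1Δ : ∀ ω, 1 + Δ ω = phat ω / c := by
    intro ω; rw [hΔ]; field_simp; ring
  have hΔpos : ∀ ω, 0 < 1 + Δ ω := by
    intro ω; rw [h1Δ]; exact div_pos (hpos ω) hc
  have hΔgt : ∀ ω, -1 < Δ ω := fun ω => by linarith [hΔpos ω]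
  have hlogeq : ∀ ω, Real.log (1 + Δ ω) = Real.log (phat ω) - Real.log c := by
    intro ω; rw [h1Δ, Real.log_div (ne_of_gt (hpos ω)) hcne]
  have hLint : Integrable (fun ω => Real.log (1 + Δ ω)) μ :=
    (hlogint.sub (integrable_const (Real.log c))).congr
      (Filter.Eventually.of_forall fun ω => (hlogeq ω).symm)
  have hΔint : Integrable Δ μ := by
    have h : Integrable (fun ω => phat ω / c - 1) μ := (hint.div_const c).sub (integrable_const 1)
    exact h.congr (Filter.Eventually.of_forall fun ω => by rw [hΔ]; field_simp)
  have hΔ0 : ∫ ω, Δ ω ∂μ = 0 := by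
    have h1 : ∫ ω, Δ ω ∂μ = ∫ ω, (phat ω / c - 1) ∂μ :=
      integral_congr_ae (Filter.Eventually.of_forall fun ω => by rw [hΔ]; field_simp)
    rw [h1, integral_sub (hint.div_const c) (integrable_const 1), integral_div, hmean,
      integral_const]
    simp [hcne]
  have hIlog : ∫ ω, Real.log (phat ω) ∂μ = Real.log c + ∫ ω, Real.log (1 + Δ ω) ∂μ := by
    have h1 : ∫ ω, Real.log (phat ω) ∂μ
        = ∫ ω, (Real.log c + Real.log (1 + Δ ω)) ∂μ :=
      integral_congr_ae (Filter.Eventually.of_forall fun ω => by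
        show Real.log (phat ω) = Real.log c + Real.log (1 + Δ ω)
        rw [hlogeq ω]; ring)
    rw [h1, integral_add (integrable_const _) hLint, integral_const]
    simp
  set f : Ω → ℝ := fun ω => Real.log (1 + Δ ω) - Δ ω + (Δ ω)^2/2 with hfdef
  have hfint : Integrable f μ := (hLint.sub hΔint).add (hΔ2.div_const 2)
  have hfI : ∫ ω, f ω ∂μ
      = (∫ ω, Real.log (1 + Δ ω) ∂μ) + (1/2) * ∫ ω, (Δ ω)^2 ∂μ := by
    have i1 : Integrable (fun ω => Real.log (1 + Δ ω) - Δ ω) μ := hLint.sub hΔint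
    have i2 : Integrable (fun ω => (Δ ω)^2/2) μ := hΔ2.div_const 2
    have e0 : ∫ ω, f ω ∂μ = ∫ ω, ((Real.log (1 + Δ ω) - Δ ω) + (Δ ω)^2/2) ∂μ := rfl
    rw [e0, integral_add i1 i2, integral_sub hLint hΔint, hΔ0, integral_div]
    ring
  have hLHS : Real.log c - (∫ ω, Real.log (phat ω) ∂μ) - (1/2) * ∫ ω, (Δ ω)^2 ∂μ
      = -(∫ ω, f ω ∂μ) := by
    rw [hIlog, hfI]; ring
  rw [hLHS, abs_neg]
  -- Cauchy-Schwarz setup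
  set a : Ω → ℝ := fun ω => |Δ ω|^3 with hadef
  set b : Ω → ℝ := fun ω => (Real.sqrt 5 * Real.sqrt (1 + Δ ω))⁻¹ with hbdef
  have hΔm : AEStronglyMeasurable Δ μ := hΔint.aestronglyMeasurable
  have ham : AEStronglyMeasurable a μ :=
    (((continuous_pow 3).comp continuous_abs).comp_aestronglyMeasurable hΔm)
  have ha2 : MemLp a 2 μ := by
    rw [memLp_two_iff_integrable_sq ham]
    apply hΔ6.congr (Filter.Eventually.of_forall fun ω => ?_)
    show (Δ ω)^6 = (|Δ ω|^3)^2
    rw [← pow_mul, ← abs_pow, abs_of_nonneg (by positivity : (0:ℝ) ≤ (Δ ω)^6)]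
  have hbinv_int : Integrable (fun ω => (1 + Δ ω)⁻¹) μ := by
    have h : Integrable (fun ω => c * (phat ω)⁻¹) μ := hinv.const_mul c
    apply h.congr (Filter.Eventually.of_forall fun ω => ?_)
    rw [h1Δ ω, inv_div, div_eq_mul_inv]
  have hbm : AEStronglyMeasurable b μ := by
    have h1 : AEStronglyMeasurable (fun ω => Real.sqrt 5 * Real.sqrt (1 + Δ ω)) μ :=
      ((Real.continuous_sqrt.comp (continuous_const.add continuous_id)).comp_aestronglyMeasurable
        hΔm).const_mul _
    exact (h1.aemeasurable.inv).aestronglyMeasurable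
  have hb2 : MemLp b 2 μ := by
    rw [memLp_two_iff_integrable_sq hbm]
    have h : Integrable (fun ω => (1/5) * (1 + Δ ω)⁻¹) μ := hbinv_int.const_mul _
    apply h.congr (Filter.Eventually.of_forall fun ω => ?_)
    show (1/5) * (1 + Δ ω)⁻¹ = ((Real.sqrt 5 * Real.sqrt (1 + Δ ω))⁻¹)^2
    have h5 : Real.sqrt 5 ^ 2 = 5 := Real.sq_sqrt (by norm_num)
    have hs : Real.sqrt (1 + Δ ω) ^ 2 = 1 + Δ ω := Real.sq_sqrt (hΔpos ω).le
    rw [inv_pow, mul_pow, h5, hs, mul_inv, one_div]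
  obtain ⟨habint, habcs⟩ := cs_aux ha2 hb2
  have hptw : ∀ ω, |f ω| ≤ a ω * b ω := by
    intro ω
    have h := ptwise (hΔgt ω)
    simpa [hfdef, hadef, hbdef, div_eq_mul_inv] using h
  have h1 : |∫ ω, f ω ∂μ| ≤ ∫ ω, a ω * b ω ∂μ := by
    calc |∫ ω, f ω ∂μ| ≤ ∫ ω, |f ω| ∂μ := by
          simpa [Real.norm_eq_abs] using norm_integral_le_integral_norm (μ := μ) f
      _ ≤ ∫ ω, a ω * b ω ∂μ := integral_mono hfint.abs habint hptw
  have ha2I : ∫ ω, a ω ^ 2 ∂μ = ∫ ω, (Δ ω)^6 ∂μ := by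
    apply integral_congr_ae (Filter.Eventually.of_forall fun ω => ?_)
    show (|Δ ω|^3)^2 = (Δ ω)^6
    rw [← pow_mul, ← abs_pow, abs_of_nonneg (by positivity : (0:ℝ) ≤ (Δ ω)^6)]
  have hb2I : ∫ ω, b ω ^ 2 ∂μ = (∫ ω, (1 + Δ ω)⁻¹ ∂μ) / 5 := by
    rw [← integral_div]
    apply integral_congr_ae (Filter.Eventually.of_forall fun ω => ?_)
    show ((Real.sqrt 5 * Real.sqrt (1 + Δ ω))⁻¹)^2 = (1 + Δ ω)⁻¹ / 5
    have h5 : Real.sqrt 5 ^ 2 = 5 := Real.sq_sqrt (by norm_num)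
    have hs : Real.sqrt (1 + Δ ω) ^ 2 = 1 + Δ ω := Real.sq_sqrt (hΔpos ω).le
    rw [inv_pow, mul_pow, h5, hs, mul_inv, div_eq_mul_inv, mul_comm]
  have hu : 0 ≤ ∫ ω, (Δ ω)^6 ∂μ := integral_nonneg fun ω => by positivity
  have hv : 0 ≤ ∫ ω, (1 + Δ ω)⁻¹ ∂μ := integral_nonneg fun ω => (inv_pos.mpr (hΔpos ω)).le
  calc |∫ ω, f ω ∂μ| ≤ ∫ ω, a ω * b ω ∂μ := h1
    _ ≤ Real.sqrt (∫ ω, a ω ^ 2 ∂μ) * Real.sqrt (∫ ω, b ω ^ 2 ∂μ) := habcs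
    _ = Real.sqrt (∫ ω, (Δ ω)^6 ∂μ) * Real.sqrt ((∫ ω, (1 + Δ ω)⁻¹ ∂μ) / 5) := by
        rw [ha2I, hb2I]
    _ = Real.sqrt (∫ ω, (1 + Δ ω)⁻¹ ∂μ) * Real.sqrt ((∫ ω, (Δ ω)^6 ∂μ) / 5) := by
        rw [show (∫ ω, (1 + Δ ω)⁻¹ ∂μ) / 5 = (∫ ω, (1 + Δ ω)⁻¹ ∂μ) * (1/5) by ring,
          show (∫ ω, (Δ ω)^6 ∂μ) / 5 = (∫ ω, (Δ ω)^6 ∂μ) * (1/5) by ring,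
          Real.sqrt_mul hv, Real.sqrt_mul hu]
        ring
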